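/- arXiv:2604.20326 — 6 statements merged into one kernel-verified Lean document; each statement's English description precedes it below -/
import Mathlib

section
/- Let p, q be positive integers with p ≥ q. Then for all z in the unit disk Δ, S_κ^{[p,q]}(z) = -p! · z^{p-q}/(1-z²)^{p+q} · Σ_{d=0}^{q-1} C_d z^{2d}, where C_d = [(p-1)!/(p-q)!] · [(-q)_d (1-q)_d] / [d! (p-q+1)_d], and (a)_n denotes the shifted factorial (a)_n = a(a+1)⋯(a+n-1), (a)_0 = 1. -/
open MeasureTheory Finset

noncomputable section

/-- The open unit disk in the complex plane. -/
def unitDisk : Set ℂ := {z : ℂ | ‖z‖ < 1}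

/-- The squared weighted Bergman norm
`‖φ‖²_α = (α+1) ∬_Δ |φ(z)|² (1-|z|²)^α dxdy / π`. -/
def bergmanNormSq (α : ℝ) (φ : ℂ → ℂ) : ℝ :=
  (α + 1) * (∫ z in unitDisk, ‖φ z‖ ^ 2 * (1 - ‖z‖ ^ 2) ^ α) / Real.pi

/-- The weighted Bergman norm. -/
def bergmanNorm (α : ℝ) (φ : ℂ → ℂ) : ℝ :=
  Real.sqrt (bergmanNormSq α φ)

/-- Membership in the weighted Bergman space `A²_α`: analytic on the unit disk
with finite weighted square integral. -/
def memBergman (α : ℝ) (φ : ℂ → ℂ) : Prop :=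
  AnalyticOn ℂ φ unitDisk ∧
  IntegrableOn (fun z => ‖φ z‖ ^ 2 * (1 - ‖z‖ ^ 2) ^ α) unitDisk

/-- The multiplier norm `‖g‖_{M_{α,β}} = sup{‖gφ‖_β/‖φ‖_α : φ ∈ A²_α, φ ≠ 0}`. -/
def multiplierNorm (α β : ℝ) (g : ℂ → ℂ) : ℝ :=
  sSup {t : ℝ | ∃ φ : ℂ → ℂ, memBergman α φ ∧ (∃ z ∈ unitDisk, φ z ≠ 0) ∧
    t = bergmanNorm β (fun z => g z * φ z) / bergmanNorm α φ}

/-- The higher-order Schwarzian derivative of the Koebe function: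
`S_κ^{[p,q]}(z) = -Σ_{n ≥ max(p,q)} (n!)²/(n·(n-p)!·(n-q)!) z^{2n-p-q}`. -/
def koebeHigherSchwarzian (p q : ℕ) (z : ℂ) : ℂ :=
  -∑' n : ℕ, if max p q ≤ n then
      ((n.factorial : ℂ) ^ 2 /
        ((n : ℂ) * ((n - p).factorial : ℂ) * ((n - q).factorial : ℂ)))
        * z ^ (2 * n - p - q)
    else 0

lemma auxFD (r : ℕ) : ∀ (d x : ℕ),
    (∑ e ∈ range (d+1), (-1:ℤ)^e * d.choose e * ((x + (d - e)).choose r))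
      = if d ≤ r then (x.choose (r-d) : ℤ) else 0 := by
  intro d
  induction d with
  | zero => intro x; simp
  | succ d ih =>
    intro x
    set g : ℕ → ℤ := fun e => ((x + (d+1 - e)).choose r : ℤ) with hg
    set u : ℕ → ℤ := fun e => (-1:ℤ)^e * d.choose e with hu
    have key : (∑ e ∈ range (d+2), (-1:ℤ)^e * (d+1).choose e * g e)
        = (∑ e ∈ range (d+2), u e * g e) - (∑ e ∈ range (d+1), u e * g (e+1)) := by
      have main : (∑ e ∈ range (d+2), (-1:ℤ)^e * (d+1).choose e * g e)
          + (∑ e ∈ range (d+1), u e * g (e+1)) = ∑ e ∈ range (d+2), u e * g e := by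
        rw [Finset.sum_range_succ' (fun e => (-1:ℤ)^e * (d+1).choose e * g e) (d+1),
            Finset.sum_range_succ' (fun e => u e * g e) (d+1)]
        have : ∀ i, (-1:ℤ)^(i+1) * (d+1).choose (i+1) * g (i+1) + u i * g (i+1)
            = u (i+1) * g (i+1) := by
          intro i
          simp only [hu, Nat.choose_succ_succ d i]
          push_cast
          ring
        rw [add_right_comm, ← Finset.sum_add_distrib]
        rw [Finset.sum_congr rfl (fun i _ => this i)]
        simp [hu]
      linarith [main]
    have first : (∑ e ∈ range (d+2), u e * g e)
        = ∑ e ∈ range (d+1), (-1:ℤ)^e * d.choose e * (((x+1) + (d - e)).choose r) := by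
      rw [Finset.sum_range_succ]
      have : u (d+1) = 0 := by simp [hu, Nat.choose_eq_zero_of_lt]
      rw [this, zero_mul, add_zero]
      apply Finset.sum_congr rfl
      intro e he
      simp only [mem_range] at he
      have : x + (d + 1 - e) = x + 1 + (d - e) := by omega
      simp only [hu, hg, this]
    have second : (∑ e ∈ range (d+1), u e * g (e+1))
        = ∑ e ∈ range (d+1), (-1:ℤ)^e * d.choose e * ((x + (d - e)).choose r) := by
      apply Finset.sum_congr rfl
      intro e he
      have : x + (d + 1 - (e+1)) = x + (d - e) := by omega
      simp only [hu, hg, this]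
    rw [key, first, second, ih (x+1), ih x]
    by_cases h : d + 1 ≤ r
    · rw [if_pos h, if_pos (by omega), if_pos (by omega)]
      have hr : r - d = (r - (d+1)) + 1 := by omega
      rw [hr, Nat.choose_succ_succ x (r - (d+1))]
      push_cast
      ring
    · by_cases h' : d ≤ r
      · have hd : d = r := by omega
        rw [if_neg h, if_pos h', if_pos h', hd]
        simp
      · rw [if_neg h, if_neg h', if_neg h']
        simp


lemma auxPochNat (d s : ℕ) : (ascPochhammer ℝ d).eval ((s:ℝ)+1) = (s+d).factorial / s.factorial := by
  have h := factorial_mul_ascPochhammer ℝ s d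
  have hs : (s.factorial : ℝ) ≠ 0 := by positivity
  field_simp
  linarith [h]

lemma auxPochNeg (d s : ℕ) (h : d ≤ s) :
    (ascPochhammer ℝ d).eval (-(s:ℝ)) = (-1)^d * s.factorial / (s-d).factorial := by
  induction d with
  | zero =>
    have : (s.factorial : ℝ) ≠ 0 := by positivity
    simp [this]
  | succ d ih =>
    have hd : d ≤ s := by omega
    rw [ascPochhammer_succ_eval, ih hd]
    obtain ⟨m, hm⟩ : ∃ m, s = m + d + 1 := ⟨s - d - 1, by omega⟩
    subst hm
    have e1 : m + d + 1 - d = m + 1 := by omega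
    have e2 : m + d + 1 - (d + 1) = m := by omega
    rw [e1, e2]
    have h4 : (m.factorial : ℝ) ≠ 0 := by positivity
    have h5 : ((m+1).factorial : ℝ) ≠ 0 := by positivity
    rw [Nat.factorial_succ m]
    push_cast
    field_simp
    ring

lemma auxCoeffC (p q d : ℕ) (hq : 0 < q) (hpq : q ≤ p) (hd : d ≤ q) :
    ∑ e ∈ range (d+1), (-1:ℂ)^e *
      ((p.factorial : ℂ) * q.factorial * ((p+q-1-(q-d+e)).factorial) /
        (((q-d+e).factorial : ℂ) * ((p-(q-d+e)).factorial) * ((q-(q-d+e)).factorial))) *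
      (((q-d+e).choose e : ℕ) : ℂ)
    = if d < q then
        ((p.factorial : ℂ) * q.factorial * ((q-1).factorial) * ((p-1).factorial)) /
          (((q-d).factorial : ℂ) * d.factorial * ((q-1-d).factorial) * ((p-q+d).factorial))
      else 0 := by
  set K : ℂ := (p.factorial : ℂ) * q.factorial * ((q-1).factorial) /
      (((q-d).factorial : ℂ) * d.factorial) with hK
  have step1 : ∀ e ∈ range (d+1),
      (-1:ℂ)^e *
      ((p.factorial : ℂ) * q.factorial * ((p+q-1-(q-d+e)).factorial) /
        (((q-d+e).factorial : ℂ) * ((p-(q-d+e)).factorial) * ((q-(q-d+e)).factorial))) *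
      (((q-d+e).choose e : ℕ) : ℂ)
      = K * (((-1:ℤ)^e * d.choose e * (((p-1) + (d-e)).choose (q-1)) : ℤ) : ℂ) := by
    intro e he
    simp only [mem_range] at he
    have he' : e ≤ d := by omega
    -- substitutions
    obtain ⟨a, ha⟩ : ∃ a, d = e + a := ⟨d - e, by omega⟩
    obtain ⟨b, hb⟩ : ∃ b, q = d + b := ⟨q - d, by omega⟩
    obtain ⟨c, hc⟩ : ∃ c, p = q + c := ⟨p - q, by omega⟩
    obtain ⟨p1, hp1⟩ : ∃ p1, p = p1 + 1 := ⟨p - 1, by omega⟩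
    have e1 : q - d + e = b + e := by omega
    have e2 : p + q - 1 - (q-d+e) = p1 + a := by omega
    have e3 : p - (q-d+e) = c + a := by omega
    have e4 : q - (q-d+e) = a := by omega
    have e5 : d - e = a := by omega
    have e6 : p - 1 = p1 := by omega
    have e7 : q - 1 ≤ p1 + a := by omega
    have e8 : p1 + a - (q-1) = c + a := by omega
    have e9 : q - d = b := by omega
    rw [e2, e3, e4, e1, e5, e6]
    have c1 : (((b+e).choose e : ℕ) : ℂ) = ((b+e).factorial : ℂ) / (e.factorial * b.factorial) := by
      rw [Nat.cast_choose ℂ (by omega : e ≤ b + e),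
        show b + e - e = b by omega]
    have c2 : ((d.choose e : ℕ) : ℂ) = (d.factorial : ℂ) / (e.factorial * a.factorial) := by
      rw [Nat.cast_choose ℂ he', show d - e = a by omega, ha]
    have c3 : (((p1 + a).choose (q-1) : ℕ) : ℂ)
        = ((p1+a).factorial : ℂ) / ((q-1).factorial * (c+a).factorial) := by
      rw [Nat.cast_choose ℂ e7, e8]
    push_cast [c1, c3]
    rw [c2]
    have f1 : ((b+e).factorial : ℂ) ≠ 0 := Nat.cast_ne_zero.2 (Nat.factorial_ne_zero _)
    have f2 : ((c+a).factorial : ℂ) ≠ 0 := Nat.cast_ne_zero.2 (Nat.factorial_ne_zero _)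
    have f3 : (a.factorial : ℂ) ≠ 0 := Nat.cast_ne_zero.2 (Nat.factorial_ne_zero _)
    have f4 : (e.factorial : ℂ) ≠ 0 := Nat.cast_ne_zero.2 (Nat.factorial_ne_zero _)
    have f5 : (b.factorial : ℂ) ≠ 0 := Nat.cast_ne_zero.2 (Nat.factorial_ne_zero _)
    have f6 : ((q-1).factorial : ℂ) ≠ 0 := Nat.cast_ne_zero.2 (Nat.factorial_ne_zero _)
    have f7 : (d.factorial : ℂ) ≠ 0 := Nat.cast_ne_zero.2 (Nat.factorial_ne_zero _)
    have f8 : ((p1+a).factorial : ℂ) ≠ 0 := Nat.cast_ne_zero.2 (Nat.factorial_ne_zero _)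
    rw [hK, e9]
    field_simp
  rw [Finset.sum_congr rfl step1, ← Finset.mul_sum]
  have hsum : (∑ e ∈ range (d+1), (((-1:ℤ)^e * d.choose e * (((p-1) + (d-e)).choose (q-1)) : ℤ) : ℂ))
      = (((if d ≤ q-1 then ((p-1).choose (q-1-d) : ℤ) else 0) : ℤ) : ℂ) := by
    rw [← Int.cast_sum]
    congr 1
    push_cast
    exact auxFD (q-1) d (p-1)
  rw [hsum]
  by_cases h : d < q
  · rw [if_pos (by omega : d ≤ q - 1), if_pos h]
    have e10 : q - 1 - d ≤ p - 1 := by omega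
    have e11 : p - 1 - (q - 1 - d) = p - q + d := by omega
    push_cast [Nat.cast_choose ℂ e10, e11]
    have f1 : ((q-1-d).factorial : ℂ) ≠ 0 := Nat.cast_ne_zero.2 (Nat.factorial_ne_zero _)
    have f2 : ((p-q+d).factorial : ℂ) ≠ 0 := Nat.cast_ne_zero.2 (Nat.factorial_ne_zero _)
    have f3 : ((q-d).factorial : ℂ) ≠ 0 := Nat.cast_ne_zero.2 (Nat.factorial_ne_zero _)
    have f4 : (d.factorial : ℂ) ≠ 0 := Nat.cast_ne_zero.2 (Nat.factorial_ne_zero _)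
    rw [hK]
    field_simp
  · rw [if_neg (by omega : ¬ d ≤ q - 1), if_neg h]
    simp

lemma auxClaim1 (p q n : ℕ) (hq : 0 < q) (hpq : q ≤ p) (hn : p ≤ n) :
    ((n.factorial : ℂ)^2 / ((n:ℂ) * ((n-p).factorial : ℂ) * ((n-q).factorial : ℂ)))
    = ∑ k ∈ range (q+1),
        ((p.factorial : ℂ) * q.factorial * ((p+q-1-k).factorial) /
          ((k.factorial : ℂ) * ((p-k).factorial) * ((q-k).factorial)))
        * (((n-1).choose (p+q-1-k) : ℕ) : ℂ) := by
  have hn1 : 1 ≤ n := le_trans (le_trans hq hpq) hn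
  have f0 : ∀ m : ℕ, (m.factorial : ℂ) ≠ 0 :=
    fun m => Nat.cast_ne_zero.2 (Nat.factorial_ne_zero _)
  set c : ℂ := (q.factorial : ℂ) * ((n-1).factorial) / ((n-p).factorial) with hc
  have perk : ∀ k ∈ range (q+1),
      ((p.factorial : ℂ) * q.factorial * ((p+q-1-k).factorial) /
          ((k.factorial : ℂ) * ((p-k).factorial) * ((q-k).factorial)))
        * (((n-1).choose (p+q-1-k) : ℕ) : ℂ)
      = c * ((p.choose k : ℕ) : ℂ) * (((n-p).choose (q-k) : ℕ) : ℂ) := by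
    intro k hk
    simp only [mem_range] at hk
    have hkq : k ≤ q := by omega
    by_cases hcase : q - k ≤ n - p
    · have h1 : p + q - 1 - k ≤ n - 1 := by omega
      have h3 : k ≤ p := le_trans hkq hpq
      rw [Nat.cast_choose ℂ h1, Nat.cast_choose ℂ h3, Nat.cast_choose ℂ hcase, hc,
        show n - 1 - (p + q - 1 - k) = n - p - (q - k) by omega]
      have g1 := f0 k
      have g2 := f0 (p-k)
      have g3 := f0 (q-k)
      have g4 := f0 (p+q-1-k)
      have g5 := f0 (n-p-(q-k))
      have g6 := f0 (n-p)
      field_simp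
    · push_neg at hcase
      have z1 : (n-1) < p + q - 1 - k := by omega
      have z2 : (n-p) < q - k := by omega
      rw [Nat.choose_eq_zero_of_lt z1, Nat.choose_eq_zero_of_lt z2]
      simp
  rw [Finset.sum_congr rfl perk]
  have vdm : (∑ k ∈ range (q+1), ((p.choose k : ℕ) : ℂ) * (((n-p).choose (q-k) : ℕ) : ℂ))
      = ((n.choose q : ℕ) : ℂ) := by
    have h := Nat.add_choose_eq p (n-p) q
    rw [Finset.Nat.sum_antidiagonal_eq_sum_range_succ_mk] at h
    have hnp : p + (n - p) = n := by omega
    rw [hnp] at h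
    exact_mod_cast h.symm
  have collect : (∑ k ∈ range (q+1), c * ((p.choose k : ℕ) : ℂ) * (((n-p).choose (q-k) : ℕ) : ℂ))
      = c * ((n.choose q : ℕ) : ℂ) := by
    rw [← vdm, Finset.mul_sum]
    exact Finset.sum_congr rfl (fun k _ => by ring)
  rw [collect, hc]
  have hqn : q ≤ n := le_trans hpq hn
  have hnn : (n : ℂ) * ((n-1).factorial : ℂ) = (n.factorial : ℂ) :=
    mod_cast Nat.mul_factorial_pred (show n ≠ 0 by omega)
  have hnne : (n : ℂ) ≠ 0 := Nat.cast_ne_zero.2 (by omega)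
  rw [Nat.cast_choose ℂ hqn,
    show (n.factorial : ℂ) = (n:ℂ) * ((n-1).factorial) from hnn.symm]
  have g6 := f0 (n-p)
  have g7 := f0 (n-q)
  have g8 := f0 q
  have g9 := f0 (n-1)
  field_simp

lemma auxPolyId (p q : ℕ) (hq : 0 < q) (hpq : q ≤ p) (w : ℂ) :
    ∑ k ∈ range (q+1),
      ((p.factorial : ℂ) * q.factorial * ((p+q-1-k).factorial) /
        ((k.factorial : ℂ) * ((p-k).factorial) * ((q-k).factorial))) * w^(q-k) * (1-w)^k
    = ∑ d ∈ range q,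
        (((p.factorial : ℂ) * q.factorial * ((q-1).factorial) * ((p-1).factorial)) /
          (((q-d).factorial : ℂ) * d.factorial * ((q-1-d).factorial) * ((p-q+d).factorial)))
          * w^d := by
  set A : ℕ → ℂ := fun k => ((p.factorial : ℂ) * q.factorial * ((p+q-1-k).factorial) /
        ((k.factorial : ℂ) * ((p-k).factorial) * ((q-k).factorial))) with hA
  have binom : ∀ k : ℕ, (1-w)^k = ∑ i ∈ range (k+1), (-1:ℂ)^i * (k.choose i : ℕ) * w^i := by
    intro k
    rw [show (1:ℂ) - w = -w + 1 by ring, add_pow]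
    apply Finset.sum_congr rfl
    intro i _
    rw [neg_pow]
    ring
  have step1 : ∑ k ∈ range (q+1), A k * w^(q-k) * (1-w)^k
      = ∑ k ∈ range (q+1), ∑ i ∈ range (k+1),
          A k * ((-1:ℂ)^i * (k.choose i : ℕ) * w^(q-k+i)) := by
    apply Finset.sum_congr rfl
    intro k hk
    simp only [mem_range] at hk
    rw [binom k, Finset.mul_sum]
    apply Finset.sum_congr rfl
    intro i hi
    rw [pow_add]
    ring
  have step2 : ∑ k ∈ range (q+1), ∑ i ∈ range (k+1),
          A k * ((-1:ℂ)^i * (k.choose i : ℕ) * w^(q-k+i))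
      = ∑ d ∈ range (q+1), ∑ e ∈ range (d+1),
          ((-1:ℂ)^e * A (q-d+e) * (((q-d+e).choose e : ℕ) : ℂ)) * w^d := by
    rw [Finset.sum_sigma', Finset.sum_sigma']
    apply Finset.sum_nbij' (fun x => ⟨q - x.1 + x.2, x.2⟩) (fun y => ⟨q - y.1 + y.2, y.2⟩)
    · rintro ⟨k, i⟩ h
      simp only [mem_sigma, mem_range] at h ⊢
      omega
    · rintro ⟨d, e⟩ h
      simp only [mem_sigma, mem_range] at h ⊢
      omega
    · rintro ⟨k, i⟩ h
      simp only [mem_sigma, mem_range] at h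
      have h1 : q - (q - k + i) + i = k := by omega
      simp [h1]
    · rintro ⟨d, e⟩ h
      simp only [mem_sigma, mem_range] at h
      have h1 : q - (q - d + e) + e = d := by omega
      simp [h1]
    · rintro ⟨k, i⟩ h
      simp only [mem_sigma, mem_range] at h
      have h1 : q - (q - k + i) + i = k := by omega
      simp only [h1]
      ring
  rw [step1, step2]
  have step3 : ∀ d ∈ range (q+1),
      (∑ e ∈ range (d+1), ((-1:ℂ)^e * A (q-d+e) * (((q-d+e).choose e : ℕ) : ℂ))) * w^d
      = (if d < q then
        ((p.factorial : ℂ) * q.factorial * ((q-1).factorial) * ((p-1).factorial)) /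
          (((q-d).factorial : ℂ) * d.factorial * ((q-1-d).factorial) * ((p-q+d).factorial))
      else 0) * w^d := by
    intro d hd
    simp only [mem_range] at hd
    rw [← auxCoeffC p q d hq hpq (by omega), Finset.sum_mul]
  rw [Finset.sum_congr rfl (fun d hd => by rw [← Finset.sum_mul]), Finset.sum_congr rfl step3,
    Finset.sum_range_succ, if_neg (lt_irrefl q), zero_mul, add_zero]
  apply Finset.sum_congr rfl
  intro d hd
  simp only [mem_range] at hd
  rw [if_pos hd]


/-- Explicit formula for the higher-order Schwarzian derivative of the Koebe function:
`S_κ^{[p,q]}(z) = -p! z^{p-q}/(1-z²)^{p+q} Σ_{d=0}^{q-1} C_d z^{2d}` where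
`C_d = (p-1)!/(p-q)! · (-q)_d (1-q)_d / (d! (p-q+1)_d)`. -/
theorem stmt1 (p q : ℕ) (hq : 0 < q) (hpq : q ≤ p) (z : ℂ) (hz : z ∈ unitDisk) :
    koebeHigherSchwarzian p q z =
      -(p.factorial : ℂ) * z ^ (p - q) / (1 - z ^ 2) ^ (p + q) *
        ∑ d ∈ Finset.range q,
          Complex.ofReal
            ((((p - 1).factorial : ℝ) / ((p - q).factorial : ℝ)) *
              ((ascPochhammer ℝ d).eval (-(q : ℝ)) * (ascPochhammer ℝ d).eval (1 - (q : ℝ))) /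
              ((d.factorial : ℝ) * (ascPochhammer ℝ d).eval ((p : ℝ) - (q : ℝ) + 1)))
            * z ^ (2 * d) := by
  have hp : 0 < p := lt_of_lt_of_le hq hpq
  have hz1 : ‖z‖ < 1 := hz
  have hz2 : ‖z^2‖ < 1 := by
    rw [norm_pow]
    nlinarith [norm_nonneg z]
  have hune : (1:ℂ) - z^2 ≠ 0 := by
    intro h
    have : z^2 = 1 := by linear_combination -h
    rw [this] at hz2
    simp at hz2
  have hmax : max p q = p := max_eq_left hpq
  set A : ℕ → ℂ := fun k => ((p.factorial : ℂ) * q.factorial * ((p+q-1-k).factorial) /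
        ((k.factorial : ℂ) * ((p-k).factorial) * ((q-k).factorial))) with hA
  set f : ℕ → ℂ := fun n => if p ≤ n then
      ((n.factorial : ℂ) ^ 2 /
        ((n : ℂ) * ((n - p).factorial : ℂ) * ((n - q).factorial : ℂ)))
        * z ^ (2 * n - p - q)
    else 0 with hf
  set g : ℕ → ℕ → ℂ := fun k n => if p ≤ n then
      A k * (((n-1).choose (p+q-1-k) : ℕ) : ℂ) * z^(2*n-p-q) else 0 with hg
  have hkoebe : koebeHigherSchwarzian p q z = -∑' n, f n := by
    unfold koebeHigherSchwarzian
    congr 1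
    apply tsum_congr
    intro n
    rw [hmax]
  have hfg : ∀ n, f n = ∑ k ∈ range (q+1), g k n := by
    intro n
    by_cases hn : p ≤ n
    · simp only [hf, hg, if_pos hn]
      rw [auxClaim1 p q n hq hpq hn, Finset.sum_mul]
    · simp only [hf, hg, if_neg hn]
      simp
  have hgsum : ∀ k ∈ range (q+1),
      HasSum (g k) (A k * z^(p+q-2*k) * (1/(1-z^2)^(p+q-k))) := by
    intro k hk
    simp only [mem_range] at hk
    have hkq : k ≤ q := by omega
    set P : ℕ := p + q - k with hP
    have hP1 : 1 ≤ P := by omega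
    have hPp : p ≤ P := by omega
    have base := hasSum_choose_mul_geometric_of_norm_lt_one (P-1) hz2
    have h2 := base.mul_left (A k * z^(p+q-2*k))
    have h3 : (fun j => g k (j + P)) =
        (fun j => A k * z^(p+q-2*k) * ((((j + (P-1)).choose (P-1) : ℕ) : ℂ) * (z^2)^j)) := by
      funext j
      simp only [hg, if_pos (show p ≤ j + P by omega)]
      rw [show j + P - 1 = j + (P - 1) by omega, show p + q - 1 - k = P - 1 by omega,
        show 2*(j+P) - p - q = 2*j + (p+q-2*k) by omega, pow_add, ← pow_mul]
      ring
    rw [← h3] at h2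
    have h4 := (hasSum_nat_add_iff P).1 h2
    have h5 : (∑ i ∈ range P, g k i) = 0 := by
      apply Finset.sum_eq_zero
      intro i hi
      simp only [mem_range] at hi
      simp only [hg]
      by_cases hip : p ≤ i
      · rw [Nat.choose_eq_zero_of_lt (show i - 1 < p + q - 1 - k by omega)]
        simp
      · rw [if_neg hip]
    rw [h5, add_zero, show (P-1)+1 = P by omega] at h4
    exact h4
  have hF := hasSum_sum hgsum
  rw [show (fun n => ∑ k ∈ range (q+1), g k n) = f from funext (fun n => (hfg n).symm)] at hF
  have htsum : ∑' n, f n = ∑ k ∈ range (q+1), A k * z^(p+q-2*k) * (1/(1-z^2)^(p+q-k)) :=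
    hF.tsum_eq
  -- transform the sum
  have perk : ∀ k ∈ range (q+1),
      A k * z^(p+q-2*k) * (1/(1-z^2)^(p+q-k))
      = (z^(p-q) / (1-z^2)^(p+q)) * (A k * (z^2)^(q-k) * (1-z^2)^k) := by
    intro k hk
    simp only [mem_range] at hk
    have e1 : z^(p+q-2*k) = z^(p-q) * (z^2)^(q-k) := by
      rw [← pow_mul, ← pow_add]
      congr 1
      omega
    have e2 : (1-z^2)^(p+q) = (1-z^2)^(p+q-k) * (1-z^2)^k := by
      rw [← pow_add]
      congr 1
      omega
    rw [e1, e2]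
    have hne1 : (1-z^2)^(p+q-k) ≠ 0 := pow_ne_zero _ hune
    have hne2 : (1-z^2)^k ≠ 0 := pow_ne_zero _ hune
    field_simp
  rw [Finset.sum_congr rfl perk, ← Finset.mul_sum] at htsum
  have hpoly := auxPolyId p q hq hpq (z^2)
  rw [hpoly] at htsum
  -- coefficient identification
  have hq1 : 1 ≤ q := hq
  have coeff_eq : ∀ d ∈ range q,
      (((p.factorial : ℂ) * q.factorial * ((q-1).factorial) * ((p-1).factorial)) /
          (((q-d).factorial : ℂ) * d.factorial * ((q-1-d).factorial) * ((p-q+d).factorial)))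
          * (z^2)^d
      = (p.factorial : ℂ) * (Complex.ofReal
            ((((p - 1).factorial : ℝ) / ((p - q).factorial : ℝ)) *
              ((ascPochhammer ℝ d).eval (-(q : ℝ)) * (ascPochhammer ℝ d).eval (1 - (q : ℝ))) /
              ((d.factorial : ℝ) * (ascPochhammer ℝ d).eval ((p : ℝ) - (q : ℝ) + 1)))
            * z ^ (2 * d)) := by
    intro d hd
    simp only [mem_range] at hd
    have hstuff : ((((p - 1).factorial : ℝ) / ((p - q).factorial : ℝ)) *
              ((ascPochhammer ℝ d).eval (-(q : ℝ)) * (ascPochhammer ℝ d).eval (1 - (q : ℝ))) /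
              ((d.factorial : ℝ) * (ascPochhammer ℝ d).eval ((p : ℝ) - (q : ℝ) + 1)))
        = (((p-1).factorial : ℝ) * q.factorial * ((q-1).factorial)) /
          (((q-d).factorial : ℝ) * d.factorial * ((q-1-d).factorial) * ((p-q+d).factorial)) := by
      have r1 : (ascPochhammer ℝ d).eval (-(q : ℝ)) = (-1)^d * q.factorial / ((q-d).factorial) :=
        auxPochNeg d q (by omega)
      have r2 : (ascPochhammer ℝ d).eval (1 - (q : ℝ))
          = (-1)^d * (q-1).factorial / ((q-1-d).factorial) := by
        have : (1 : ℝ) - (q : ℝ) = -(((q-1 : ℕ) : ℝ)) := by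
          have : ((q-1 : ℕ) : ℝ) = (q : ℝ) - 1 := by
            push_cast [Nat.cast_sub hq1]
            ring
          rw [this]; ring
        rw [this, auxPochNeg d (q-1) (by omega), show q-1-d = q-1-d from rfl]
      have r3 : (ascPochhammer ℝ d).eval ((p : ℝ) - (q : ℝ) + 1)
          = ((p-q+d).factorial : ℝ) / ((p-q).factorial) := by
        have : (p : ℝ) - (q : ℝ) = ((p - q : ℕ) : ℝ) := by
          rw [Nat.cast_sub hpq]
        rw [this, auxPochNat d (p-q)]
      have hsign : ((-1:ℝ))^d * (-1:ℝ)^d = 1 := by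
        rw [← pow_add, ← two_mul, pow_mul]
        norm_num
      have r12 : ((-1:ℝ)^d * (q.factorial : ℝ) / ((q-d).factorial)) *
            ((-1:ℝ)^d * ((q-1).factorial : ℝ) / ((q-1-d).factorial))
          = ((q.factorial : ℝ) * ((q-1).factorial)) /
            (((q-d).factorial : ℝ) * ((q-1-d).factorial)) := by
        rw [div_mul_div_comm,
          show ((-1:ℝ)^d * (q.factorial : ℝ)) * ((-1:ℝ)^d * ((q-1).factorial : ℝ))
            = ((-1:ℝ)^d * (-1:ℝ)^d) * ((q.factorial : ℝ) * ((q-1).factorial)) by ring,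
          hsign, one_mul]
      rw [r1, r2, r3, r12]
      have f0 : ∀ m : ℕ, (m.factorial : ℝ) ≠ 0 :=
        fun m => Nat.cast_ne_zero.2 (Nat.factorial_ne_zero _)
      have g1 := f0 (q-d)
      have g2 := f0 (q-1-d)
      have g3 := f0 (p-q)
      have g4 := f0 (p-q+d)
      have g5 := f0 d
      field_simp
    rw [hstuff]
    have hfact : ((p-1).factorial : ℂ) * p = (p.factorial : ℂ) := by
      have : p = (p-1) + 1 := by omega
      rw [this, Nat.factorial_succ]
      push_cast
      ring
    rw [← pow_mul]
    push_cast
    rw [← hfact]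
    have f0 : ∀ m : ℕ, (m.factorial : ℂ) ≠ 0 :=
      fun m => Nat.cast_ne_zero.2 (Nat.factorial_ne_zero _)
    have g1 := f0 (q-d)
    have g2 := f0 (q-1-d)
    have g3 := f0 (p-q)
    have g4 := f0 (p-q+d)
    have g5 := f0 d
    field_simp
  rw [Finset.sum_congr rfl coeff_eq, ← Finset.mul_sum] at htsum
  rw [hkoebe, htsum]
  ring
end
end

section
/- Let p, q be positive integers with p ≥ q, and for 0 ≤ d ≤ q-1 let C_d = [(p-1)!/(p-q)!] · [(-q)_d (1-q)_d] / [d! (p-q+1)_d]. Then each C_d is positive and Σ_{d=0}^{q-1} C_d = (p+q-1)!/p!. -/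
noncomputable section

private lemma fact_ne (n : ℕ) : ((n.factorial : ℝ)) ≠ 0 :=
  Nat.cast_ne_zero.mpr n.factorial_ne_zero

private lemma term_eq (p q d : ℕ) (hd : d < q) (hpq : q ≤ p) :
    (((p - 1).factorial : ℝ) / ((p - q).factorial : ℝ)) *
        ((ascPochhammer ℝ d).eval (-(q : ℝ)) * (ascPochhammer ℝ d).eval (1 - (q : ℝ))) /
        ((d.factorial : ℝ) * (ascPochhammer ℝ d).eval ((p : ℝ) - (q : ℝ) + 1)) =
      (((q - 1).factorial * q.choose d * (p - 1).choose (q - 1 - d) : ℕ) : ℝ) := by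
  obtain ⟨e, rfl⟩ : ∃ e, q = d + 1 + e := ⟨q - d - 1, by omega⟩
  obtain ⟨r, rfl⟩ : ∃ r, p = (d + 1 + e) + r := ⟨p - (d + 1 + e), by omega⟩
  have hs1 : d + 1 + e + r - 1 = d + e + r := by omega
  have hs2 : d + 1 + e + r - (d + 1 + e) = r := by omega
  have hs3 : d + 1 + e - 1 = d + e := by omega
  have hs4 : d + e - d = e := by omega
  rw [hs1, hs2, hs3, hs4]
  -- evaluate the Pochhammer symbols
  have hA : (ascPochhammer ℝ d).eval (-((d + 1 + e : ℕ) : ℝ)) =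
      (-1) ^ d * ((d + 1 + e).descFactorial d : ℝ) := by
    rw [ascPochhammer_eval_neg_eq_descPochhammer, descPochhammer_eval_eq_descFactorial]
  have hB : (ascPochhammer ℝ d).eval (1 - ((d + 1 + e : ℕ) : ℝ)) =
      (-1) ^ d * ((d + e).descFactorial d : ℝ) := by
    have : (1 : ℝ) - ((d + 1 + e : ℕ) : ℝ) = -((d + e : ℕ) : ℝ) := by push_cast; ring
    rw [this, ascPochhammer_eval_neg_eq_descPochhammer, descPochhammer_eval_eq_descFactorial]
  have hE : (ascPochhammer ℝ d).eval (((d + 1 + e + r : ℕ) : ℝ) - ((d + 1 + e : ℕ) : ℝ) + 1) =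
      ((r + 1).ascFactorial d : ℝ) := by
    have : ((d + 1 + e + r : ℕ) : ℝ) - ((d + 1 + e : ℕ) : ℝ) + 1 = ((r + 1 : ℕ) : ℝ) := by
      push_cast; ring
    rw [this, ← ascPochhammer_eval_cast, ascPochhammer_nat_eq_ascFactorial]
  rw [hA, hB, hE]
  -- express everything as factorial ratios
  have rA : ((d + 1 + e).descFactorial d : ℝ) = ((d + 1 + e).factorial : ℝ) /
      ((e + 1).factorial : ℝ) := by
    rw [eq_div_iff (fact_ne _)]
    have := Nat.factorial_mul_descFactorial (n := d + 1 + e) (k := d) (by omega)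
    rw [show d + 1 + e - d = e + 1 by omega, mul_comm] at this
    exact_mod_cast this
  have rB : ((d + e).descFactorial d : ℝ) = ((d + e).factorial : ℝ) / (e.factorial : ℝ) := by
    rw [eq_div_iff (fact_ne _)]
    have := Nat.factorial_mul_descFactorial (n := d + e) (k := d) (by omega)
    rw [show d + e - d = e by omega] at this
    rw [mul_comm] at this
    exact_mod_cast this
  have rE : (((r + 1).ascFactorial d : ℕ) : ℝ) = ((r + d).factorial : ℝ) / (r.factorial : ℝ) := by
    rw [eq_div_iff (fact_ne _)]
    have := Nat.factorial_mul_ascFactorial r d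
    rw [mul_comm] at this
    exact_mod_cast this
  have rC1 : (((d + 1 + e).choose d : ℕ) : ℝ) = ((d + 1 + e).factorial : ℝ) /
      ((d.factorial : ℝ) * ((e + 1).factorial : ℝ)) := by
    rw [eq_div_iff (by exact mul_ne_zero (fact_ne _) (fact_ne _))]
    have := Nat.choose_mul_factorial_mul_factorial (n := d + 1 + e) (k := d) (by omega)
    rw [show d + 1 + e - d = e + 1 by omega, mul_assoc] at this
    exact_mod_cast this
  have rC2 : (((d + e + r).choose e : ℕ) : ℝ) = ((d + e + r).factorial : ℝ) /
      ((e.factorial : ℝ) * ((d + r).factorial : ℝ)) := by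
    rw [eq_div_iff (by exact mul_ne_zero (fact_ne _) (fact_ne _))]
    have := Nat.choose_mul_factorial_mul_factorial (n := d + e + r) (k := e) (by omega)
    rw [show d + e + r - e = d + r by omega, mul_assoc] at this
    exact_mod_cast this
  have hsign : ((-1 : ℝ) ^ d * ((d + 1 + e).descFactorial d : ℝ)) *
      ((-1 : ℝ) ^ d * ((d + e).descFactorial d : ℝ)) =
      ((d + 1 + e).descFactorial d : ℝ) * ((d + e).descFactorial d : ℝ) := by
    rw [mul_mul_mul_comm, ← mul_pow]; norm_num
  rw [hsign]
  push_cast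
  rw [rA, rB, rE, rC1, rC2]
  have hrd : r + d = d + r := by omega
  rw [hrd]
  field_simp

private lemma nat_sum (p q : ℕ) (hq : 0 < q) (hpq : q ≤ p) :
    ∑ d ∈ Finset.range q, (q - 1).factorial * q.choose d * (p - 1).choose (q - 1 - d) =
      (q - 1).factorial * (p + q - 1).choose (q - 1) := by
  simp only [mul_assoc]
  rw [← Finset.mul_sum]
  congr 1
  have h := Nat.add_choose_eq q (p - 1) (q - 1)
  rw [Finset.Nat.sum_antidiagonal_eq_sum_range_succ_mk] at h
  simp only [Nat.succ_eq_add_one, show q - 1 + 1 = q by omega] at h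
  rw [show p + q - 1 = q + (p - 1) by omega, h]

/-- The coefficients `C_d = (p-1)!/(p-q)! · (-q)_d (1-q)_d / (d! (p-q+1)_d)` are positive and
sum to `(p+q-1)!/p!`. -/
theorem stmt2 (p q : ℕ) (hq : 0 < q) (hpq : q ≤ p) :
    (∀ d < q,
      0 < (((p - 1).factorial : ℝ) / ((p - q).factorial : ℝ)) *
            ((ascPochhammer ℝ d).eval (-(q : ℝ)) * (ascPochhammer ℝ d).eval (1 - (q : ℝ))) /
            ((d.factorial : ℝ) * (ascPochhammer ℝ d).eval ((p : ℝ) - (q : ℝ) + 1))) ∧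
    ∑ d ∈ Finset.range q,
        (((p - 1).factorial : ℝ) / ((p - q).factorial : ℝ)) *
            ((ascPochhammer ℝ d).eval (-(q : ℝ)) * (ascPochhammer ℝ d).eval (1 - (q : ℝ))) /
            ((d.factorial : ℝ) * (ascPochhammer ℝ d).eval ((p : ℝ) - (q : ℝ) + 1)) =
      ((p + q - 1).factorial : ℝ) / (p.factorial : ℝ) := by
  constructor
  · intro d hd
    rw [term_eq p q d hd hpq]
    have h1 : 0 < q.choose d := Nat.choose_pos (le_of_lt hd)
    have h2 : 0 < (p - 1).choose (q - 1 - d) := Nat.choose_pos (by omega)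
    have : 0 < (q - 1).factorial * q.choose d * (p - 1).choose (q - 1 - d) := by
      positivity
    exact_mod_cast this
  · rw [Finset.sum_congr rfl fun d hd => term_eq p q d (Finset.mem_range.mp hd) hpq]
    rw [← Nat.cast_sum, nat_sum p q hq hpq, eq_div_iff (fact_ne _)]
    have := Nat.choose_mul_factorial_mul_factorial (n := p + q - 1) (k := q - 1) (by omega)
    rw [show p + q - 1 - (q - 1) = p by omega] at this
    exact_mod_cast (by rw [mul_comm ((q-1).factorial)]; exact this :
      (q - 1).factorial * (p + q - 1).choose (q - 1) * p.factorial = (p + q - 1).factorial)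
end
end

section
/- Let p, q be positive integers. Then for all z in the unit disk Δ, |S_κ^{[p,q]}(z)| ≤ (p+q-1)!/|1-z²|^{p+q}. -/
open MeasureTheory Finset

noncomputable section

section AuxKoebe

lemma aux_tri (p j i : ℕ) : p.choose j * (p - j).choose i = p.choose i * (p - i).choose j := by
  by_cases h : j + i ≤ p
  · have h1 := Nat.choose_mul (n := p) (k := j + i) (s := j) (Nat.le_add_right j i)
    have h2 := Nat.choose_mul (n := p) (k := j + i) (s := i) (Nat.le_add_left i j)
    rw [Nat.add_sub_cancel_left] at h1
    rw [Nat.add_sub_cancel] at h2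
    have hs : (j + i).choose i = (j + i).choose j := by
      have := Nat.choose_symm (Nat.le_add_right j i)
      rwa [Nat.add_sub_cancel_left] at this
    rw [← h1, ← h2, hs]
  · have hl : p.choose j * (p - j).choose i = 0 := by
      rcases le_or_gt j p with hj | hj
      · rw [Nat.choose_eq_zero_of_lt (show p - j < i by omega), mul_zero]
      · rw [Nat.choose_eq_zero_of_lt hj, zero_mul]
    have hr : p.choose i * (p - i).choose j = 0 := by
      rcases le_or_gt i p with hi | hi
      · rw [Nat.choose_eq_zero_of_lt (show p - i < j by omega), mul_zero]
      · rw [Nat.choose_eq_zero_of_lt hi, zero_mul]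
    rw [hl, hr]

lemma aux_chain (N K M : ℕ) (h : M ≤ K) :
    N.choose K * K.choose M = N.choose M * (N - M).choose (K - M) := by
  rcases le_or_gt K N with hK | hK
  · exact Nat.choose_mul h
  · rw [Nat.choose_eq_zero_of_lt hK, zero_mul]
    rcases le_or_gt M N with hM | hM
    · rw [Nat.choose_eq_zero_of_lt (show N - M < K - M by omega), mul_zero]
    · rw [Nat.choose_eq_zero_of_lt hM, zero_mul]

lemma aux_vand (a b k : ℕ) :
    (a + b).choose k = ∑ i ∈ range (k + 1), a.choose i * b.choose (k - i) := by
  rw [Nat.add_choose_eq, Finset.Nat.sum_antidiagonal_eq_sum_range_succ_mk]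

lemma aux_ID (p q n : ℕ) (hp : 1 ≤ p) (hpq : p ≤ q) (hn : q ≤ n) :
    ∑ j ∈ range p, p.choose j * ((q - 1).choose (p - 1 - j) * (n + p - 1 - j).choose (p + q - 1))
      = n.choose q * (n - 1).choose (p - 1) := by
  have hq1 : 1 ≤ q := le_trans hp hpq
  have hn1 : 1 ≤ n := le_trans hq1 hn
  calc
    ∑ j ∈ range p, p.choose j * ((q - 1).choose (p - 1 - j) * (n + p - 1 - j).choose (p + q - 1))
        = ∑ j ∈ range p, ∑ i ∈ range (p + q),
            (n - 1).choose (p + q - 1 - i) * (p.choose i * ((p - i).choose j * (q - 1).choose (p - 1 - j))) := by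
      refine Finset.sum_congr rfl fun j hj => ?_
      rw [Finset.mem_range] at hj
      have e1 : n + p - 1 - j = (p - j) + (n - 1) := by omega
      have e2 : p + q - 1 + 1 = p + q := by omega
      rw [e1, aux_vand, e2, Finset.mul_sum, Finset.mul_sum]
      refine Finset.sum_congr rfl fun i _ => ?_
      rw [show p.choose j * ((q - 1).choose (p - 1 - j) * ((p - j).choose i * (n - 1).choose (p + q - 1 - i)))
            = (p.choose j * (p - j).choose i) * ((q - 1).choose (p - 1 - j) * (n - 1).choose (p + q - 1 - i)) by ring,
          aux_tri]
      ring
    _ = ∑ i ∈ range (p + q),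
          (n - 1).choose (p + q - 1 - i) * (p.choose i * (((p - i) + (q - 1)).choose (p - 1))) := by
      rw [Finset.sum_comm]
      refine Finset.sum_congr rfl fun i _ => ?_
      rw [← Finset.mul_sum, ← Finset.mul_sum]
      congr 1
      congr 1
      rw [aux_vand, show p - 1 + 1 = p by omega]
    _ = ∑ i ∈ range (p + 1),
          (n - 1).choose (p + q - 1 - i) * (p.choose i * (((p - i) + (q - 1)).choose (p - 1))) := by
      symm
      refine Finset.sum_subset (by intro x hx; simp only [Finset.mem_range] at *; omega) ?_
      intro i _ hi
      rw [Finset.mem_range, not_lt] at hi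
      rw [Nat.choose_eq_zero_of_lt (by omega : p < i)]
      ring
    _ = ∑ i ∈ range (p + 1), (n - 1).choose (p - 1) * (p.choose i * (n - p).choose (q - i)) := by
      refine Finset.sum_congr rfl fun i hi => ?_
      rw [Finset.mem_range] at hi
      have e3 : (p - i) + (q - 1) = p + q - 1 - i := by omega
      rw [e3]
      rw [show (n - 1).choose (p + q - 1 - i) * (p.choose i * (p + q - 1 - i).choose (p - 1))
            = p.choose i * ((n - 1).choose (p + q - 1 - i) * (p + q - 1 - i).choose (p - 1)) by ring,
          aux_chain _ _ _ (by omega : p - 1 ≤ p + q - 1 - i),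
          show n - 1 - (p - 1) = n - p by omega,
          show p + q - 1 - i - (p - 1) = q - i by omega]
      ring
    _ = (n - 1).choose (p - 1) * ∑ i ∈ range (q + 1), p.choose i * (n - p).choose (q - i) := by
      rw [← Finset.mul_sum]
      congr 1
      refine Finset.sum_subset (by intro x hx; simp only [Finset.mem_range] at *; omega) ?_
      intro i _ hi
      rw [Finset.mem_range, not_lt] at hi
      rw [Nat.choose_eq_zero_of_lt (by omega : p < i)]
      ring
    _ = n.choose q * (n - 1).choose (p - 1) := by
      rw [← aux_vand, show p + (n - p) = n by omega]
      ring

lemma aux_coeff (p q n : ℕ) (hp : 1 ≤ p) (hpq : p ≤ q) (hn : q ≤ n) :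
    (n.factorial : ℂ) ^ 2 / ((n : ℂ) * ((n - p).factorial : ℂ) * ((n - q).factorial : ℂ))
      = ((q.factorial * (p - 1).factorial * (n.choose q * (n - 1).choose (p - 1)) : ℕ) : ℂ) := by
  have hn0 : (n : ℂ) ≠ 0 := Nat.cast_ne_zero.2 (by omega)
  have hfp : (((n - p).factorial : ℕ) : ℂ) ≠ 0 := Nat.cast_ne_zero.2 (Nat.factorial_ne_zero _)
  have hfq : (((n - q).factorial : ℕ) : ℂ) ≠ 0 := Nat.cast_ne_zero.2 (Nat.factorial_ne_zero _)
  rw [div_eq_iff (by exact mul_ne_zero (mul_ne_zero hn0 hfp) hfq)]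
  have key : n.factorial * n.factorial
      = q.factorial * (p - 1).factorial * (n.choose q * (n - 1).choose (p - 1))
        * (n * (n - p).factorial * (n - q).factorial) := by
    have e1 : n.choose q * q.factorial * (n - q).factorial = n.factorial :=
      Nat.choose_mul_factorial_mul_factorial hn
    have e2 : (n - 1).choose (p - 1) * (p - 1).factorial * (n - p).factorial
        = (n - 1).factorial := by
      have h := Nat.choose_mul_factorial_mul_factorial (n := n - 1) (k := p - 1) (by omega)
      rwa [show n - 1 - (p - 1) = n - p by omega] at h
    have e3 : n * (n - 1).factorial = n.factorial := Nat.mul_factorial_pred (by omega)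
    calc n.factorial * n.factorial
        = (n.choose q * q.factorial * (n - q).factorial)
            * (n * ((n - 1).choose (p - 1) * (p - 1).factorial * (n - p).factorial)) := by
          rw [e1, e2, e3]
      _ = _ := by ring
  calc (n.factorial : ℂ) ^ 2 = ((n.factorial * n.factorial : ℕ) : ℂ) := by push_cast; ring
    _ = _ := by rw [key]; push_cast; ring

lemma aux_main (p q : ℕ) (hp : 0 < p) (hpq : p ≤ q) (z : ℂ) (hz : ‖z‖ < 1) :
    ‖koebeHigherSchwarzian p q z‖ ≤ ((p + q - 1).factorial : ℝ) / ‖1 - z ^ 2‖ ^ (p + q) := by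
  have hq : 0 < q := lt_of_lt_of_le hp hpq
  set u : ℂ := z ^ 2 with hu_def
  have hu : ‖u‖ < 1 := by
    rw [hu_def, norm_pow]
    nlinarith [norm_nonneg z]
  set c : ℕ → ℕ := fun j => p.choose j * (q - 1).choose (p - 1 - j) with hc
  -- per-j HasSum
  have hjsum : ∀ j ∈ range p,
      HasSum (fun m : ℕ =>
          ((if j ≤ m then c j * ((m - j) + (p + q - 1)).choose (p + q - 1) else 0 : ℕ) : ℂ) * u ^ m)
        ((c j : ℂ) * u ^ j * (1 / (1 - u) ^ (p + q))) := by
    intro j _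
    have h0 : HasSum (fun k : ℕ => (((k + (p + q - 1)).choose (p + q - 1) : ℕ) : ℂ) * u ^ k)
        (1 / (1 - u) ^ (p + q - 1 + 1)) :=
      hasSum_choose_mul_geometric_of_norm_lt_one _ hu
    rw [show p + q - 1 + 1 = p + q by omega] at h0
    have h1 := h0.mul_left ((c j : ℂ) * u ^ j)
    refine ((add_left_injective j).hasSum_iff ?_).mp ?_
    · intro m hm
      have hjm : ¬ j ≤ m := by
        intro h
        exact hm ⟨m - j, by simp; omega⟩
      simp [hjm]
    · have heq : ((fun m : ℕ =>
          ((if j ≤ m then c j * ((m - j) + (p + q - 1)).choose (p + q - 1) else 0 : ℕ) : ℂ) * u ^ m)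
            ∘ (· + j))
          = fun k : ℕ => (c j : ℂ) * u ^ j * ((((k + (p + q - 1)).choose (p + q - 1) : ℕ) : ℂ) * u ^ k) := by
        funext k
        simp only [Function.comp_apply]
        rw [if_pos (Nat.le_add_left j k), Nat.add_sub_cancel, pow_add]
        push_cast
        ring
      rw [heq]
      exact h1
  have hSsum := hasSum_sum hjsum
  -- termwise identification
  have hterm : (fun m : ℕ => ∑ j ∈ range p,
        ((if j ≤ m then c j * ((m - j) + (p + q - 1)).choose (p + q - 1) else 0 : ℕ) : ℂ) * u ^ m)
      = fun m : ℕ => (((m + q).choose q * ((m + q - 1).choose (p - 1)) : ℕ) : ℂ) * u ^ m := by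
    funext m
    rw [← Finset.sum_mul, ← Nat.cast_sum]
    congr 2
    rw [← aux_ID p q (m + q) hp hpq (by omega)]
    refine Finset.sum_congr rfl fun j hj => ?_
    rw [Finset.mem_range] at hj
    by_cases hjm : j ≤ m
    · rw [if_pos hjm, show (m - j) + (p + q - 1) = (m + q) + p - 1 - j by omega, hc]
      ring
    · rw [if_neg hjm,
        Nat.choose_eq_zero_of_lt (show (m + q) + p - 1 - j < p + q - 1 by omega), mul_zero,
        mul_zero]
  rw [hterm] at hSsum
  -- multiply by prefactor
  set K : ℂ := ((q.factorial * (p - 1).factorial : ℕ) : ℂ) * z ^ (q - p) with hK_def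
  have hK := hSsum.mul_left K
  -- reindex
  have hfinal : HasSum (fun n : ℕ => if max p q ≤ n then
        ((n.factorial : ℂ) ^ 2 /
          ((n : ℂ) * ((n - p).factorial : ℂ) * ((n - q).factorial : ℂ)))
          * z ^ (2 * n - p - q) else 0)
      (K * ∑ j ∈ range p, (c j : ℂ) * u ^ j * (1 / (1 - u) ^ (p + q))) := by
    refine ((add_left_injective q).hasSum_iff ?_).mp ?_
    · intro n hn
      have hnq : ¬ q ≤ n := by
        intro h
        exact hn ⟨n - q, by simp; omega⟩
      rw [if_neg (by rw [max_eq_right hpq]; exact hnq)]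
    · have heq : ((fun n : ℕ => if max p q ≤ n then
            ((n.factorial : ℂ) ^ 2 /
              ((n : ℂ) * ((n - p).factorial : ℂ) * ((n - q).factorial : ℂ)))
              * z ^ (2 * n - p - q) else 0) ∘ (· + q))
          = fun m : ℕ => K * ((((m + q).choose q * ((m + q - 1).choose (p - 1)) : ℕ) : ℂ) * u ^ m) := by
        funext m
        simp only [Function.comp_apply]
        rw [if_pos (by rw [max_eq_right hpq]; omega)]
        rw [aux_coeff p q (m + q) hp hpq (by omega)]
        rw [show 2 * (m + q) - p - q = (q - p) + 2 * m by omega, pow_add, pow_mul, hK_def,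
          ← hu_def]
        push_cast
        ring
      rw [heq]
      exact hK
  have hS : koebeHigherSchwarzian p q z
      = -(K * ∑ j ∈ range p, (c j : ℂ) * u ^ j * (1 / (1 - u) ^ (p + q))) := by
    rw [koebeHigherSchwarzian, hfinal.tsum_eq]
  -- final estimate
  have h1u : (1 : ℂ) - u ≠ 0 := by
    intro h
    rw [sub_eq_zero] at h
    rw [← h] at hu
    simp at hu
  have hDpos : (0:ℝ) < ‖(1:ℂ) - u‖ ^ (p + q) := pow_pos (norm_pos_iff.2 h1u) _
  rw [hS, norm_neg]
  have hsum_c : ∑ j ∈ range p, c j = (p + q - 1).choose (p - 1) := by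
    have := aux_vand p (q - 1) (p - 1)
    rw [show p - 1 + 1 = p by omega, show p + (q - 1) = p + q - 1 by omega] at this
    rw [hc, ← this]
  have hfact : (p + q - 1).choose (p - 1) * (p - 1).factorial * q.factorial
      = (p + q - 1).factorial := by
    have h := Nat.choose_mul_factorial_mul_factorial (n := p + q - 1) (k := p - 1) (by omega)
    rwa [show p + q - 1 - (p - 1) = q by omega] at h
  have hS0 : ‖∑ j ∈ range p, (c j : ℂ) * u ^ j‖ ≤ ((p + q - 1).choose (p - 1) : ℝ) := by
    calc ‖∑ j ∈ range p, (c j : ℂ) * u ^ j‖ ≤ ∑ j ∈ range p, ‖(c j : ℂ) * u ^ j‖ :=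
          norm_sum_le _ _
      _ ≤ ∑ j ∈ range p, (c j : ℝ) := by
          refine Finset.sum_le_sum fun j _ => ?_
          rw [norm_mul, norm_pow]
          calc ‖((c j : ℕ) : ℂ)‖ * ‖u‖ ^ j ≤ ‖((c j : ℕ) : ℂ)‖ * 1 := by
                gcongr
                exact pow_le_one₀ (norm_nonneg _) hu.le
            _ = (c j : ℝ) := by simp
      _ = ((∑ j ∈ range p, c j : ℕ) : ℝ) := by rw [Nat.cast_sum]
      _ = _ := by rw [hsum_c]
  calc ‖K * ∑ j ∈ range p, (c j : ℂ) * u ^ j * (1 / (1 - u) ^ (p + q))‖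
      = ((q.factorial * (p - 1).factorial : ℕ) : ℝ) * ‖z‖ ^ (q - p)
        * (‖∑ j ∈ range p, (c j : ℂ) * u ^ j‖ * (1 / ‖(1:ℂ) - u‖ ^ (p + q))) := by
          rw [← Finset.sum_mul, hK_def]
          simp only [norm_mul, norm_div, norm_one, norm_pow, Complex.norm_natCast]
    _ ≤ ((q.factorial * (p - 1).factorial : ℕ) : ℝ) * 1
        * (((p + q - 1).choose (p - 1) : ℝ) * (1 / ‖(1:ℂ) - u‖ ^ (p + q))) := by
          gcongr
          exact pow_le_one₀ (norm_nonneg _) hz.le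
    _ = ((p + q - 1).factorial : ℝ) / ‖(1:ℂ) - u‖ ^ (p + q) := by
          rw [← hfact]
          push_cast
          ring

lemma koebe_symm (p q : ℕ) (z : ℂ) :
    koebeHigherSchwarzian p q z = koebeHigherSchwarzian q p z := by
  unfold koebeHigherSchwarzian
  congr 1
  apply tsum_congr
  intro n
  rw [max_comm]
  split_ifs with h
  · rw [show 2 * n - p - q = 2 * n - q - p by omega]
    ring
  · rfl

end AuxKoebe

/-- Pointwise bound for the higher-order Schwarzian of the Koebe function:
`|S_κ^{[p,q]}(z)| ≤ (p+q-1)!/|1-z²|^{p+q}`. -/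
theorem stmt3 (p q : ℕ) (hp : 0 < p) (hq : 0 < q) (z : ℂ) (hz : z ∈ unitDisk) :
    ‖koebeHigherSchwarzian p q z‖ ≤ ((p + q - 1).factorial : ℝ) / ‖1 - z ^ 2‖ ^ (p + q) := by
  have hz' : ‖z‖ < 1 := hz
  rcases le_total p q with h | h
  · exact aux_main p q hp h z hz'
  · have := aux_main q p hq h z hz'
    rw [koebe_symm p q z, Nat.add_comm p q]
    exact this
end
end

section
/- Let q be a positive integer. Then for every real t with 0 ≤ t < 1, Σ_{n=q}^∞ [ (n!/(n-q)!)² / n ] · t^{2n-2q} ≤ (2q-1)!/(1-t²)^{2q}. -/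
noncomputable section

private lemma fact_shift (j a b : ℕ) (hj : j ≤ a) (hab : a ≤ b) :
    a.factorial * b.factorial ≤ (a - j).factorial * (b + j).factorial := by
  induction j with
  | zero => simp
  | succ j ih =>
    have h1 : a.factorial * b.factorial ≤ (a - j).factorial * (b + j).factorial :=
      ih (by omega)
    refine h1.trans ?_
    have haj : 0 < a - j := by omega
    have e1 : (a - j).factorial = (a - j) * (a - (j+1)).factorial := by
      rw [show a - (j+1) = (a - j) - 1 by omega, Nat.mul_factorial_pred haj.ne']
    have e2 : (b + (j+1)).factorial = (b + j + 1) * (b + j).factorial := by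
      rw [show b + (j+1) = (b + j) + 1 by omega, Nat.factorial_succ]
    rw [e1, e2]
    calc (a - j) * (a - (j+1)).factorial * (b + j).factorial
        ≤ (b + j + 1) * (a - (j+1)).factorial * (b + j).factorial := by
          exact Nat.mul_le_mul_right _ (Nat.mul_le_mul_right _ (by omega))
      _ = (a - (j+1)).factorial * ((b + j + 1) * (b + j).factorial) := by ring

/-- The series bound `Σ_{n≥q} (n!/(n-q)!)²/n · t^{2n-2q} ≤ (2q-1)!/(1-t²)^{2q}`
for `0 ≤ t < 1`. -/
theorem stmt13 (q : ℕ) (hq : 0 < q) (t : ℝ) (ht0 : 0 ≤ t) (ht1 : t < 1) :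
    (∑' n : ℕ, if q ≤ n then
        ((n.factorial : ℝ) / ((n - q).factorial : ℝ)) ^ 2 / (n : ℝ) * t ^ (2 * n - 2 * q)
      else 0) ≤
      ((2 * q - 1).factorial : ℝ) / (1 - t ^ 2) ^ (2 * q) := by
  set m := 2 * q - 1 with hm
  set r : ℝ := t ^ 2 with hr
  have hr0 : 0 ≤ r := sq_nonneg t
  have hr1 : r < 1 := by
    rw [hr]
    nlinarith
  have hrn : ‖r‖ < 1 := by rwa [Real.norm_eq_abs, abs_of_nonneg hr0]
  set f : ℕ → ℝ := fun n => if q ≤ n then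
      ((n.factorial : ℝ) / ((n - q).factorial : ℝ)) ^ 2 / (n : ℝ) * t ^ (2 * n - 2 * q)
    else 0 with hf
  set g : ℕ → ℝ := fun n => if q ≤ n then
      (m.factorial : ℝ) * (((n - q) + m).choose m : ℝ) * r ^ (n - q) else 0 with hg
  -- termwise bound
  have hfg : ∀ n, f n ≤ g n := by
    intro n
    simp only [hf, hg]
    by_cases hn : q ≤ n
    · simp only [hn, if_true]
      have hpow : t ^ (2 * n - 2 * q) = r ^ (n - q) := by
        rw [hr, ← pow_mul]
        congr 1
        omega
      rw [hpow]
      refine mul_le_mul_of_nonneg_right ?_ (pow_nonneg hr0 _)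
      -- coefficient bound
      have hc : (m.factorial : ℝ) * (((n - q) + m).choose m : ℝ) =
          (((n - q) + m).factorial : ℝ) / ((n - q).factorial : ℝ) := by
        rw [eq_div_iff (by positivity)]
        push_cast [← Nat.cast_mul]
        norm_cast
        rw [← Nat.add_choose_mul_factorial_mul_factorial (n - q) m]
        ring
      rw [hc]
      have hnpos : (0:ℝ) < n := by exact_mod_cast Nat.lt_of_lt_of_le hq hn
      rw [div_pow, div_div, div_le_div_iff₀ (by positivity) (by positivity)]
      -- reduce to a Nat inequality
      have key : (n-1).factorial * n.factorial ≤ (n - q).factorial * ((n - q) + m).factorial := by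
        have := fact_shift (q-1) (n-1) n (by omega) (by omega)
        rwa [show n - 1 - (q-1) = n - q by omega, show n + (q-1) = (n - q) + m by omega] at this
      have keyN : n.factorial * n.factorial * (n - q).factorial ≤
          ((n - q) + m).factorial * ((n - q).factorial * (n - q).factorial * n) := by
        calc n.factorial * n.factorial * (n - q).factorial
            = n * ((n-1).factorial * n.factorial) * (n - q).factorial := by
              rw [← Nat.mul_assoc, Nat.mul_factorial_pred (by omega)]
          _ ≤ n * ((n - q).factorial * ((n - q) + m).factorial) * (n - q).factorial := by
              exact Nat.mul_le_mul_right _ (Nat.mul_le_mul_left _ key)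
          _ = ((n - q) + m).factorial * ((n - q).factorial * (n - q).factorial * n) := by ring
      calc ((n.factorial : ℝ)) ^ 2 * ((n - q).factorial : ℝ)
          = ((n.factorial * n.factorial * (n - q).factorial : ℕ) : ℝ) := by push_cast; ring
        _ ≤ ((((n - q) + m).factorial * ((n - q).factorial * (n - q).factorial * n) : ℕ) : ℝ) := by
            exact_mod_cast keyN
        _ = (((n - q) + m).factorial : ℝ) * (((n - q).factorial : ℝ) ^ 2 * n) := by
            push_cast; ring
    · simp [hn]
  -- sum of g
  have hinj : Function.Injective (fun k : ℕ => k + q) := add_left_injective q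
  have hsupp : ∀ x ∉ Set.range (fun k : ℕ => k + q), g x = 0 := by
    intro x hx
    simp only [Set.mem_range, not_exists] at hx
    have : ¬ q ≤ x := fun h => hx (x - q) (by omega)
    simp [hg, this]
  have hcomp : (g ∘ fun k : ℕ => k + q) = fun k : ℕ =>
      (m.factorial : ℝ) * ((k + m).choose m : ℝ) * r ^ k := by
    funext k
    simp only [Function.comp, hg, le_add_iff_nonneg_left, Nat.zero_le, if_true,
      Nat.add_sub_cancel]
  have hS : HasSum (fun k : ℕ => (m.factorial : ℝ) * ((k + m).choose m : ℝ) * r ^ k)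
      ((m.factorial : ℝ) * (1 / (1 - r) ^ (m + 1))) := by
    have := (hasSum_choose_mul_geometric_of_norm_lt_one m hrn).mul_left (m.factorial : ℝ)
    simpa [mul_assoc] using this
  have hgsum : HasSum g ((m.factorial : ℝ) * (1 / (1 - r) ^ (m + 1))) := by
    rw [← hinj.hasSum_iff hsupp, hcomp]
    exact hS
  have hf0 : ∀ n, 0 ≤ f n := by
    intro n
    simp only [hf]
    by_cases hn : q ≤ n
    · simp only [hn, if_true]
      positivity
    · simp [hn]
  have hfs : Summable f :=
    Summable.of_nonneg_of_le hf0 hfg hgsum.summable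
  have hle := Summable.tsum_le_tsum hfg hfs hgsum.summable
  rw [hgsum.tsum_eq] at hle
  refine hle.trans_eq ?_
  rw [show m + 1 = 2 * q by omega]
  field_simp
end
end

section
/- Let p, q be positive integers. Then sup_{z∈Δ} |S_κ^{[p,q]}(z)|(1-|z|²)^{p+q} = (p+q-1)!, where S_κ^{[p,q]} is the higher-order Schwarzian derivative of the Koebe function. -/
open MeasureTheory Finset

noncomputable section

/-! ### Natural number factorial inequalities -/

lemma nat1 (p : ℕ) : ∀ n, p ≤ n → n.factorial * (n-1).factorial ≤ (n+p-1).factorial * (n-p).factorial := by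
  induction p with
  | zero => intro n _; simp [Nat.mul_comm]
  | succ p ih =>
      intro n hn
      have h1 : p ≤ n := by omega
      have e1 : n + (p+1) - 1 = (n + p - 1) + 1 := by omega
      have e2 : n - p = (n - (p+1)) + 1 := by omega
      calc n.factorial * (n-1).factorial ≤ (n+p-1).factorial * (n-p).factorial := ih n h1
        _ = (n+p-1).factorial * ((n - (p+1)) + 1).factorial := by rw [← e2]
        _ = (n+p-1).factorial * (((n - (p+1)) + 1) * (n-(p+1)).factorial) := by
              rw [Nat.factorial_succ]
        _ ≤ (n+p-1).factorial * (((n + p - 1) + 1) * (n-(p+1)).factorial) := by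
              apply Nat.mul_le_mul_left
              apply Nat.mul_le_mul_right
              omega
        _ = (n + (p+1) - 1).factorial * (n-(p+1)).factorial := by
              rw [e1, Nat.factorial_succ]; ring

lemma nat2 (q : ℕ) (hq : 1 ≤ q) (p : ℕ) (hp : 1 ≤ p) : ∀ n, p + q ≤ n →
    n * (n-p).factorial * (n-q).factorial ≤ n.factorial * (n+1-p-q).factorial := by
  induction p, hp using Nat.le_induction with
  | base =>
      intro n hn
      have e : n + 1 - 1 - q = n - q := by omega
      have : n * (n-1).factorial = n.factorial := by
        cases n with
        | zero => omega
        | succ k => simp [Nat.factorial_succ]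
      rw [e, this]
  | succ p hp ih =>
      intro n hn
      have ihn := ih n (by omega)
      have e1 : n - p = (n - (p+1)) + 1 := by omega
      have e2 : n + 1 - p - q = (n - p - q) + 1 := by omega
      have e3 : n + 1 - (p+1) - q = n - p - q := by omega
      rw [e1, Nat.factorial_succ] at ihn
      rw [e2, Nat.factorial_succ] at ihn
      rw [e3]
      have hpos : 0 < n - p - q + 1 := by omega
      apply Nat.le_of_mul_le_mul_left _ hpos
      calc (n - p - q + 1) * (n * (n - (p+1)).factorial * (n-q).factorial)
          ≤ (n - (p+1) + 1) * (n * (n - (p+1)).factorial * (n-q).factorial) := by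
            apply Nat.mul_le_mul_right; omega
        _ = n * ((n - (p+1) + 1) * (n - (p+1)).factorial) * (n-q).factorial := by ring
        _ ≤ n.factorial * ((n - p - q + 1) * (n - p - q).factorial) := ihn
        _ = (n - p - q + 1) * (n.factorial * (n - p - q).factorial) := by ring

lemma nat_ub0 (p q n : ℕ) (hp : 1 ≤ p) (hpq : p ≤ q) (hn : q ≤ n) :
    n.factorial * n.factorial * (n - q).factorial ≤
      n * (n-p).factorial * (n-q).factorial * (n - q + (p + q - 1)).factorial := by
  have e : n - q + (p + q - 1) = n + p - 1 := by omega
  rw [e]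
  have h1 := nat1 p n (by omega)
  calc n.factorial * n.factorial * (n-q).factorial
      = (n * (n-1).factorial) * n.factorial * (n-q).factorial := by
        rw [Nat.mul_factorial_pred (by omega)]
    _ = n * (n.factorial * (n-1).factorial) * (n-q).factorial := by ring
    _ ≤ n * ((n+p-1).factorial * (n-p).factorial) * (n-q).factorial := by
        apply Nat.mul_le_mul_right; apply Nat.mul_le_mul_left; exact h1
    _ = n * (n-p).factorial * (n-q).factorial * (n+p-1).factorial := by ring

-- cancel (n - max p q)! :  n! n! ≤ d! C(n-m+d, d) (n (n-p)! (n-q)!)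
lemma nat_ub (p q n : ℕ) (hp : 1 ≤ p) (hq : 1 ≤ q) (hn : max p q ≤ n) :
    n.factorial * n.factorial ≤
      (p+q-1).factorial * ((n - max p q + (p+q-1)).choose (p+q-1)) *
        (n * (n-p).factorial * (n-q).factorial) := by
  set m := max p q with hm
  set d := p + q - 1 with hd
  have key : (n - m + d).choose d * d.factorial * (n - m).factorial = (n - m + d).factorial := by
    have := Nat.choose_mul_factorial_mul_factorial (Nat.le_add_left d (n - m))
    simpa [Nat.add_sub_cancel] using this
  have main : n.factorial * n.factorial * (n - m).factorial ≤
      n * (n-p).factorial * (n-q).factorial * (n - m + d).factorial := by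
    rcases le_total p q with h | h
    · have := nat_ub0 p q n hp h (by omega)
      have em : m = q := by omega
      rw [em]; exact this
    · have := nat_ub0 q p n hq h (by omega)
      have em : m = p := by omega
      have ed : q + p - 1 = d := by omega
      rw [em]
      calc n.factorial * n.factorial * (n - p).factorial
          = n.factorial * n.factorial * (n - p).factorial := rfl
        _ ≤ n * (n-q).factorial * (n-p).factorial * (n - p + (q + p - 1)).factorial := this
        _ = n * (n-p).factorial * (n-q).factorial * (n - p + d).factorial := by rw [ed]; ring
  have hpos : 0 < (n - m).factorial := Nat.factorial_pos _
  apply Nat.le_of_mul_le_mul_right _ hpos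
  calc n.factorial * n.factorial * (n - m).factorial
      ≤ n * (n-p).factorial * (n-q).factorial * (n - m + d).factorial := main
    _ = n * (n-p).factorial * (n-q).factorial * ((n - m + d).choose d * d.factorial * (n - m).factorial) := by rw [key]
    _ = d.factorial * ((n - m + d).choose d) * (n * (n-p).factorial * (n-q).factorial) * (n - m).factorial := by ring

lemma nat_lb (p q n : ℕ) (hp : 1 ≤ p) (hq : 1 ≤ q) (hn : p + q ≤ n) :
    (p+q-1).factorial * (n.choose (p+q-1)) * (n * (n-p).factorial * (n-q).factorial) ≤
      n.factorial * n.factorial := by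
  set d := p + q - 1 with hd
  have hdn : d ≤ n := by omega
  have key : d.factorial * (n.choose d) * (n - d).factorial = n.factorial := by
    have := Nat.choose_mul_factorial_mul_factorial hdn
    calc d.factorial * n.choose d * (n-d).factorial
        = n.choose d * d.factorial * (n-d).factorial := by ring
      _ = n.factorial := this
  have h2 := nat2 q hq p hp n hn
  have e : n + 1 - p - q = n - d := by omega
  rw [e] at h2
  calc d.factorial * (n.choose d) * (n * (n-p).factorial * (n-q).factorial)
      ≤ d.factorial * (n.choose d) * (n.factorial * (n-d).factorial) := by
        apply Nat.mul_le_mul_left; exact h2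
    _ = (d.factorial * (n.choose d) * (n-d).factorial) * n.factorial := by ring
    _ = n.factorial * n.factorial := by rw [key]

/-! ### Real analysis -/

section Core

variable (p q : ℕ)

/-- The real absolute-value version of the terms. -/
def A (r : ℝ) (n : ℕ) : ℝ :=
  if max p q ≤ n then
    ((n.factorial : ℝ) ^ 2 / ((n : ℝ) * ((n - p).factorial : ℝ) * ((n - q).factorial : ℝ)))
      * r ^ (2 * n - p - q)
  else 0

lemma A_nonneg (r : ℝ) (hr : 0 ≤ r) (n : ℕ) : 0 ≤ A p q r n := by
  unfold A
  split
  · positivity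
  · exact le_refl 0

lemma term_norm (z : ℂ) (n : ℕ) :
    ‖(if max p q ≤ n then
      ((n.factorial : ℂ) ^ 2 /
        ((n : ℂ) * ((n - p).factorial : ℂ) * ((n - q).factorial : ℂ)))
        * z ^ (2 * n - p - q)
    else 0)‖ = A p q ‖z‖ n := by
  unfold A
  split
  · simp [norm_mul, norm_div, norm_pow]
  · simp

end Core
section Core2

variable (p q : ℕ) (hp : 0 < p) (hq : 0 < q)

/-- Majorant. -/
def B (x : ℝ) (n : ℕ) : ℝ :=
  if max p q ≤ n then
    ((p+q-1).factorial : ℝ) * (((n - max p q + (p+q-1)).choose (p+q-1) : ℕ) : ℝ)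
      * x ^ (n - max p q)
  else 0

include hp hq in
lemma A_le_B (r : ℝ) (hr0 : 0 ≤ r) (hr1 : r < 1) (n : ℕ) :
    A p q r n ≤ B p q (r^2) n := by
  unfold A B
  split
  · rename_i h
    set m := max p q with hm
    set d := p + q - 1 with hd
    have hn : 0 < n := lt_of_lt_of_le (by omega) h
    -- coefficient bound
    have hc : ((n.factorial : ℝ))^2 / ((n:ℝ) * ((n-p).factorial) * ((n-q).factorial)) ≤
        (d.factorial : ℝ) * ((n - m + d).choose d : ℕ) := by
      rw [div_le_iff₀ (by positivity)]
      have hnat := nat_ub p q n hp hq h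
      calc ((n.factorial:ℝ))^2 = ((n.factorial * n.factorial : ℕ) : ℝ) := by push_cast; ring
        _ ≤ ((d.factorial * ((n - m + d).choose d) * (n * (n-p).factorial * (n-q).factorial) : ℕ) : ℝ) := by
              exact_mod_cast hnat
        _ = (d.factorial : ℝ) * ((n - m + d).choose d : ℕ) * ((n:ℝ) * ((n-p).factorial) * ((n-q).factorial)) := by
              push_cast; ring
    -- power bound
    have hpow : r ^ (2 * n - p - q) ≤ (r^2) ^ (n - m) := by
      rw [← pow_mul]
      apply pow_le_pow_of_le_one hr0 (le_of_lt hr1)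
      omega
    calc ((n.factorial : ℝ))^2 / ((n:ℝ) * ((n-p).factorial) * ((n-q).factorial)) * r ^ (2*n-p-q)
        ≤ ((d.factorial : ℝ) * ((n - m + d).choose d : ℕ)) * ((r^2) ^ (n - m)) := by
          apply mul_le_mul hc hpow (by positivity)
          positivity
      _ = _ := by ring
  · exact le_refl 0

lemma hasSum_B (x : ℝ) (hx0 : 0 ≤ x) (hx1 : x < 1) :
    HasSum (B p q x) (((p+q-1).factorial : ℝ) / (1 - x) ^ (p + q - 1 + 1)) := by
  set m := max p q with hm
  set d := p + q - 1 with hd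
  have hx : ‖x‖ < 1 := by rw [Real.norm_eq_abs, abs_of_nonneg hx0]; exact hx1
  have hG := (hasSum_choose_mul_geometric_of_norm_lt_one (𝕜 := ℝ) d hx).mul_left
      (d.factorial : ℝ)
  have hsum : (d.factorial : ℝ) * (1 / (1-x)^(d+1)) = (d.factorial : ℝ) / (1-x)^(d+1) := by ring
  rw [hsum] at hG
  have hinj : Function.Injective (fun j : ℕ => j + m) := fun a b h => by simpa using h
  have h0 : ∀ n, n ∉ Set.range (fun j : ℕ => j + m) → B p q x n = 0 := by
    intro n hn
    have : ¬ (m ≤ n) := by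
      intro hmn
      exact hn ⟨n - m, by simp only []; show n - m + m = n; omega⟩
    unfold B
    rw [if_neg this]
  rw [← Function.Injective.hasSum_iff hinj h0]
  convert hG using 1
  rfl
  funext j
  show B p q x (j + m) = _
  unfold B
  rw [if_pos (by omega)]
  have e : j + m - m = j := by omega
  rw [e]
  ring

end Core2
section Core3

variable (p q : ℕ) (hp : 0 < p) (hq : 0 < q)

include hp hq in
lemma summable_A (r : ℝ) (hr0 : 0 ≤ r) (hr1 : r < 1) : Summable (A p q r) := by
  have hx0 : (0:ℝ) ≤ r^2 := by positivity
  have hx1 : r^2 < 1 := by nlinarith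
  exact (hasSum_B p q (r^2) hx0 hx1).summable.of_nonneg_of_le
    (A_nonneg p q r hr0) (A_le_B p q hp hq r hr0 hr1)

include hp hq in
lemma upper_bound (z : ℂ) (hz : ‖z‖ < 1) :
    ‖koebeHigherSchwarzian p q z‖ * (1 - ‖z‖ ^ 2) ^ (p + q) ≤ ((p+q-1).factorial : ℝ) := by
  set r := ‖z‖ with hr
  have hr0 : 0 ≤ r := norm_nonneg z
  have hx0 : (0:ℝ) ≤ r^2 := by positivity
  have hx1 : r^2 < 1 := by nlinarith
  have h1x : 0 < 1 - r^2 := by linarith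
  have hA := summable_A p q hp hq r hr0 hz
  have hnorm : ∀ n : ℕ, ‖(if max p q ≤ n then
      ((n.factorial : ℂ) ^ 2 /
        ((n : ℂ) * ((n - p).factorial : ℂ) * ((n - q).factorial : ℂ)))
        * z ^ (2 * n - p - q) else 0)‖ = A p q r n := term_norm p q z
  have hKle : ‖koebeHigherSchwarzian p q z‖ ≤ ∑' n, A p q r n := by
    rw [koebeHigherSchwarzian, norm_neg]
    calc ‖∑' n : ℕ, (if max p q ≤ n then
          ((n.factorial : ℂ) ^ 2 /
            ((n : ℂ) * ((n - p).factorial : ℂ) * ((n - q).factorial : ℂ)))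
            * z ^ (2 * n - p - q) else 0)‖
        ≤ ∑' n : ℕ, ‖(if max p q ≤ n then
          ((n.factorial : ℂ) ^ 2 /
            ((n : ℂ) * ((n - p).factorial : ℂ) * ((n - q).factorial : ℂ)))
            * z ^ (2 * n - p - q) else 0)‖ := by
          apply norm_tsum_le_tsum_norm
          simpa only [hnorm] using hA
      _ = ∑' n, A p q r n := by
          congr 1; funext n; exact hnorm n
  have hAB : ∑' n, A p q r n ≤ ((p+q-1).factorial : ℝ) / (1 - r^2) ^ (p+q-1+1) := by
    rw [← (hasSum_B p q (r^2) hx0 hx1).tsum_eq]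
    exact Summable.tsum_le_tsum (A_le_B p q hp hq r hr0 hz) hA (hasSum_B p q (r^2) hx0 hx1).summable
  have hexp : p + q - 1 + 1 = p + q := by omega
  rw [hexp] at hAB
  calc ‖koebeHigherSchwarzian p q z‖ * (1 - r ^ 2) ^ (p + q)
      ≤ (((p+q-1).factorial : ℝ) / (1 - r^2) ^ (p+q)) * (1 - r^2) ^ (p+q) := by
        apply mul_le_mul_of_nonneg_right (le_trans hKle hAB) (by positivity)
    _ = ((p+q-1).factorial : ℝ) := by
        field_simp

end Core3
section Core4

variable (p q : ℕ) (hp : 0 < p) (hq : 0 < q)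

/-- Minorant. -/
def Cm (x r : ℝ) (n : ℕ) : ℝ :=
  if p + q ≤ n then
    ((p+q-1).factorial : ℝ) * (((n-1).choose (p+q-1) : ℕ) : ℝ) * x ^ (n - (p+q)) * r ^ (p+q)
  else 0

lemma hasSum_Cm (hpq : 0 < p + q) (x r : ℝ) (hx0 : 0 ≤ x) (hx1 : x < 1) :
    HasSum (Cm p q x r)
      ((((p+q-1).factorial : ℝ) / (1 - x) ^ (p + q - 1 + 1)) * r ^ (p+q)) := by
  set d := p + q - 1 with hd
  have hx : ‖x‖ < 1 := by rw [Real.norm_eq_abs, abs_of_nonneg hx0]; exact hx1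
  have hG := ((hasSum_choose_mul_geometric_of_norm_lt_one (𝕜 := ℝ) d hx).mul_left
      (d.factorial : ℝ)).mul_right (r ^ (p+q))
  have hsum : (d.factorial : ℝ) * (1 / (1-x)^(d+1)) * r^(p+q)
      = ((d.factorial : ℝ) / (1-x)^(d+1)) * r^(p+q) := by ring
  rw [hsum] at hG
  have hinj : Function.Injective (fun j : ℕ => j + (p+q)) := fun a b h => by simpa using h
  have h0 : ∀ n, n ∉ Set.range (fun j : ℕ => j + (p+q)) → Cm p q x r n = 0 := by
    intro n hn
    have : ¬ (p + q ≤ n) := by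
      intro hmn
      exact hn ⟨n - (p+q), by simp only []; show n - (p+q) + (p+q) = n; omega⟩
    unfold Cm
    rw [if_neg this]
  rw [← Function.Injective.hasSum_iff hinj h0]
  convert hG using 1
  rfl
  funext j
  show Cm p q x r (j + (p+q)) = _
  unfold Cm
  rw [if_pos (by omega)]
  have e1 : j + (p+q) - 1 = j + d := by rw [hd]; omega
  have e2 : j + (p+q) - (p+q) = j := by omega
  rw [e1, e2]
  ring

include hp hq in
lemma Cm_le_A (r : ℝ) (hr0 : 0 ≤ r) (n : ℕ) :
    Cm p q (r^2) r n ≤ A p q r n := by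
  unfold Cm A
  set d := p + q - 1 with hd
  by_cases h : p + q ≤ n
  · rw [if_pos h, if_pos (by omega)]
    have hn : 0 < n := by omega
    have hcoef : (d.factorial : ℝ) * ((n-1).choose d : ℕ) ≤
        ((n.factorial : ℝ))^2 / ((n:ℝ) * ((n-p).factorial) * ((n-q).factorial)) := by
      rw [le_div_iff₀ (by positivity)]
      have mono : (n-1).choose d ≤ n.choose d := Nat.choose_le_choose d (by omega)
      have hnat := nat_lb p q n hp hq h
      calc (d.factorial : ℝ) * ((n-1).choose d : ℕ) * ((n:ℝ) * ((n-p).factorial) * ((n-q).factorial))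
          = ((d.factorial * ((n-1).choose d) * (n * (n-p).factorial * (n-q).factorial) : ℕ) : ℝ) := by
            push_cast; ring
        _ ≤ ((d.factorial * (n.choose d) * (n * (n-p).factorial * (n-q).factorial) : ℕ) : ℝ) := by
            have := Nat.mul_le_mul_right (n * (n-p).factorial * (n-q).factorial)
              (Nat.mul_le_mul_left d.factorial mono)
            exact_mod_cast this
        _ ≤ ((n.factorial * n.factorial : ℕ) : ℝ) := by exact_mod_cast hnat
        _ = ((n.factorial : ℝ))^2 := by push_cast; ring
    have hpow : (r^2) ^ (n - (p+q)) * r ^ (p+q) = r ^ (2*n-p-q) := by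
      rw [← pow_mul, ← pow_add]
      congr 1
      omega
    calc (d.factorial : ℝ) * ((n-1).choose d : ℕ) * (r^2) ^ (n-(p+q)) * r ^ (p+q)
        = ((d.factorial : ℝ) * ((n-1).choose d : ℕ)) * ((r^2) ^ (n-(p+q)) * r ^ (p+q)) := by ring
      _ = ((d.factorial : ℝ) * ((n-1).choose d : ℕ)) * r ^ (2*n-p-q) := by rw [hpow]
      _ ≤ (((n.factorial : ℝ))^2 / ((n:ℝ) * ((n-p).factorial) * ((n-q).factorial))) * r ^ (2*n-p-q) := by
          apply mul_le_mul_of_nonneg_right hcoef (by positivity)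
  · rw [if_neg h]
    exact A_nonneg p q r hr0 n

include hp hq in
lemma lower_bound (r : ℝ) (hr0 : 0 ≤ r) (hr1 : r < 1) :
    ((p+q-1).factorial : ℝ) * r ^ (p+q) ≤
      ‖koebeHigherSchwarzian p q ((r:ℂ))‖ * (1 - ‖((r:ℂ))‖ ^ 2) ^ (p + q) := by
  have hnr : ‖((r:ℂ))‖ = r := by
    rw [Complex.norm_real, Real.norm_eq_abs, abs_of_nonneg hr0]
  have hx0 : (0:ℝ) ≤ r^2 := by positivity
  have hx1 : r^2 < 1 := by nlinarith
  have h1x : 0 < 1 - r^2 := by linarith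
  have hA := summable_A p q hp hq r hr0 hr1
  -- the complex series is the cast of the real one
  have hterm : ∀ n : ℕ, (if max p q ≤ n then
      ((n.factorial : ℂ) ^ 2 /
        ((n : ℂ) * ((n - p).factorial : ℂ) * ((n - q).factorial : ℂ)))
        * ((r:ℂ)) ^ (2 * n - p - q) else 0) = ((A p q r n : ℝ) : ℂ) := by
    intro n
    unfold A
    split
    · push_cast
      ring
    · simp
  have hK : ‖koebeHigherSchwarzian p q ((r:ℂ))‖ = ∑' n, A p q r n := by
    rw [koebeHigherSchwarzian, norm_neg]
    have : (∑' n : ℕ, (if max p q ≤ n then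
        ((n.factorial : ℂ) ^ 2 /
          ((n : ℂ) * ((n - p).factorial : ℂ) * ((n - q).factorial : ℂ)))
          * ((r:ℂ)) ^ (2 * n - p - q) else 0)) = ((∑' n, A p q r n : ℝ) : ℂ) := by
      rw [Complex.ofReal_tsum]
      congr 1
      funext n
      exact hterm n
    rw [this, Complex.norm_real, Real.norm_eq_abs,
      abs_of_nonneg (tsum_nonneg (A_nonneg p q r hr0))]
  have hCA : (((p+q-1).factorial : ℝ) / (1 - r^2) ^ (p + q - 1 + 1)) * r ^ (p+q) ≤
      ∑' n, A p q r n := by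
    rw [← (hasSum_Cm p q (by omega) (r^2) r hx0 hx1).tsum_eq]
    exact Summable.tsum_le_tsum (Cm_le_A p q hp hq r hr0) (hasSum_Cm p q (by omega) (r^2) r hx0 hx1).summable hA
  have hexp : p + q - 1 + 1 = p + q := by omega
  rw [hexp] at hCA
  rw [hK, hnr]
  calc ((p+q-1).factorial : ℝ) * r ^ (p+q)
      = ((((p+q-1).factorial : ℝ) / (1 - r^2) ^ (p+q)) * r ^ (p+q)) * (1 - r^2) ^ (p+q) := by
        field_simp
    _ ≤ (∑' n, A p q r n) * (1 - r^2) ^ (p+q) := by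
        apply mul_le_mul_of_nonneg_right hCA (by positivity)

end Core4

/-- The growth-space norm of the higher-order Schwarzian of the Koebe function:
`sup_{z∈Δ} |S_κ^{[p,q]}(z)|(1-|z|²)^{p+q} = (p+q-1)!`. -/
theorem stmt15 (p q : ℕ) (hp : 0 < p) (hq : 0 < q) :
    ⨆ z : unitDisk, ‖koebeHigherSchwarzian p q (z : ℂ)‖ * (1 - ‖(z : ℂ)‖ ^ 2) ^ (p + q) =
      ((p + q - 1).factorial : ℝ) := by
  haveI : Nonempty unitDisk := ⟨⟨0, by simp [unitDisk]⟩⟩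
  have hub : ∀ z : unitDisk,
      ‖koebeHigherSchwarzian p q (z : ℂ)‖ * (1 - ‖(z : ℂ)‖ ^ 2) ^ (p + q) ≤
        ((p + q - 1).factorial : ℝ) := fun z => upper_bound p q hp hq (z : ℂ) z.2
  have hbdd : BddAbove (Set.range fun z : unitDisk =>
      ‖koebeHigherSchwarzian p q (z : ℂ)‖ * (1 - ‖(z : ℂ)‖ ^ 2) ^ (p + q)) := by
    refine ⟨((p + q - 1).factorial : ℝ), ?_⟩
    rintro x ⟨z, rfl⟩
    exact hub z
  apply le_antisymm
  · exact ciSup_le hub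
  · apply le_of_forall_lt
    intro c hc
    have hfacpos : (0:ℝ) < ((p + q - 1).factorial : ℝ) := by positivity
    -- choose r with c < (p+q-1)! * r^(p+q)
    obtain ⟨r, hr0, hr1, hrc⟩ : ∃ r : ℝ, 0 ≤ r ∧ r < 1 ∧
        c < ((p + q - 1).factorial : ℝ) * r ^ (p + q) := by
      rcases lt_or_ge c 0 with h | h
      · exact ⟨0, le_refl 0, by norm_num, by
          rw [zero_pow (by omega : p + q ≠ 0), mul_zero]; exact h⟩
      · set t : ℝ := (c + ((p + q - 1).factorial : ℝ)) / (2 * ((p + q - 1).factorial : ℝ)) with ht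
        have ht0 : 0 ≤ t := by positivity
        have ht1 : t < 1 := by
          rw [ht, div_lt_one (by positivity)]
          linarith
        refine ⟨t ^ ((p + q : ℝ))⁻¹, Real.rpow_nonneg ht0 _, ?_, ?_⟩
        · rcases eq_or_lt_of_le ht0 with h0 | h0
          · rw [← h0, Real.zero_rpow (by positivity : ((p+q:ℝ))⁻¹ ≠ 0)]; norm_num
          · exact Real.rpow_lt_one ht0 ht1 (by positivity)
        · have hpow : (t ^ ((p + q : ℝ))⁻¹) ^ (p + q) = t := by
            rw [← Real.rpow_natCast (t ^ ((p + q : ℝ))⁻¹) (p+q), ← Real.rpow_mul ht0]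
            push_cast
            rw [inv_mul_cancel₀ (by positivity : ((p:ℝ) + q) ≠ 0), Real.rpow_one]
          rw [hpow]
          have hval : ((p + q - 1).factorial : ℝ) * t =
              (c + ((p + q - 1).factorial : ℝ)) / 2 := by
            rw [ht]
            field_simp
          rw [hval]
          linarith
    have hlb := lower_bound p q hp hq r hr0 hr1
    have hmem : ((r:ℂ)) ∈ unitDisk := by
      simp only [unitDisk, Set.mem_setOf_eq, Complex.norm_real, Real.norm_eq_abs,
        abs_of_nonneg hr0]
      exact hr1
    calc c < ((p + q - 1).factorial : ℝ) * r ^ (p + q) := hrc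
      _ ≤ ‖koebeHigherSchwarzian p q ((r:ℂ))‖ * (1 - ‖((r:ℂ))‖ ^ 2) ^ (p + q) := hlb
      _ ≤ _ := le_ciSup hbdd ⟨((r:ℂ)), hmem⟩
end
end

section
/- Let p, q be positive integers with p ≠ q. Then (2p-1)!(2q-1)! > [(p+q-1)!]²; consequently √((2p-1)!(2q-1)!) > (p+q-1)!. -/
lemma fact_key (m d : ℕ) (hd : 1 ≤ d) (hdm : d ≤ m) :
    (m.factorial) ^ 2 < (m + d).factorial * (m - d).factorial := by
  induction d with
  | zero => omega
  | succ d ih =>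
    rcases Nat.eq_or_lt_of_le hd with h1 | h1
    · -- d + 1 = 1, i.e. d = 0
      have hd0 : d = 0 := by omega
      subst hd0
      have hm : 1 ≤ m := hdm
      obtain ⟨k, rfl⟩ : ∃ k, m = k + 1 := ⟨m - 1, by omega⟩
      have : (k+1).factorial = (k+1) * (k+1 - 1).factorial := by
        simp [Nat.factorial_succ]
      calc (k+1).factorial ^ 2 = (k+1) * ((k+1-1).factorial * (k+1).factorial) := by
            rw [pow_two]; nth_rewrite 1 [this]; ring
        _ < (k+1+1) * ((k+1-1).factorial * (k+1).factorial) := by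
            apply Nat.mul_lt_mul_of_lt_of_le (by omega) le_rfl (by positivity)
        _ = (k + 1 + 1).factorial * (k + 1 - 1).factorial := by
            rw [show (k+1+1).factorial = (k+1+1) * (k+1).factorial from Nat.factorial_succ _]
            ring
    · have hd' : 1 ≤ d := by omega
      have ih' := ih hd' (by omega)
      have step : (m + d).factorial * (m - d).factorial <
          (m + (d+1)).factorial * (m - (d+1)).factorial := by
        have h2 : m - d = (m - (d+1)) + 1 := by omega
        rw [h2, Nat.factorial_succ, show m + (d+1) = (m+d) + 1 by ring, Nat.factorial_succ]
        calc (m + d).factorial * ((m - (d+1) + 1) * (m - (d+1)).factorial)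
            = (m - (d+1) + 1) * ((m + d).factorial * (m - (d+1)).factorial) := by ring
          _ < (m + d + 1) * ((m + d).factorial * (m - (d+1)).factorial) := by
              apply Nat.mul_lt_mul_of_lt_of_le (by omega) le_rfl (by positivity)
          _ = (m + d + 1) * (m + d).factorial * (m - (d+1)).factorial := by ring
      exact ih'.trans step

/-- For positive integers `p ≠ q`, `(2p-1)!(2q-1)! > ((p+q-1)!)²` and hence
`√((2p-1)!(2q-1)!) > (p+q-1)!`. -/
theorem stmt16 (p q : ℕ) (hp : 0 < p) (hq : 0 < q) (hne : p ≠ q) :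
    ((p + q - 1).factorial) ^ 2 < (2 * p - 1).factorial * (2 * q - 1).factorial ∧
    ((p + q - 1).factorial : ℝ) <
      Real.sqrt (((2 * p - 1).factorial : ℝ) * ((2 * q - 1).factorial : ℝ)) := by
  have key : ((p + q - 1).factorial) ^ 2 < (2 * p - 1).factorial * (2 * q - 1).factorial := by
    rcases lt_or_gt_of_ne hne with h | h
    · have := fact_key (p + q - 1) (q - p) (by omega) (by omega)
      rw [show p + q - 1 + (q - p) = 2*q - 1 by omega,
          show p + q - 1 - (q - p) = 2*p - 1 by omega] at this
      rw [mul_comm]; exact this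
    · have := fact_key (p + q - 1) (p - q) (by omega) (by omega)
      rw [show p + q - 1 + (p - q) = 2*p - 1 by omega,
          show p + q - 1 - (p - q) = 2*q - 1 by omega] at this
      exact this
  refine ⟨key, ?_⟩
  rw [Real.lt_sqrt (by positivity)]
  have : (((p + q - 1).factorial) ^ 2 : ℝ) <
      ((2 * p - 1).factorial : ℝ) * ((2 * q - 1).factorial : ℝ) := by
    exact_mod_cast key
  exact this
end
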